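/- Let X = {(x,y) ∈ ℂ² : xⁿ = y^{n+1}} for an integer n > 1, set b = n/(n+1), and let f : S¹ → X ∩ S³ be a bi-Lipschitz homeomorphism with bi-Lipschitz constant λ ≥ 1, written f = (f₁, f₂). Define F : {u ∈ ℂ : |u| ≤ 1} → X by F(tv) = (t·f₁(v), t^b·f₂(v)) for v ∈ S¹, t ∈ [0,1], and F(0) = 0. Then F is b-Hölder: ‖F(u₁) − F(u₂)‖ ≤ (6λ+3)‖u₁ − u₂‖^b for all u₁, u₂ in the closed unit disc. -/

import Mathlib

open Set Metric

/-- A point `(a, b)` of Euclidean `ℂ²`. -/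
noncomputable def pt2 (a b : ℂ) : EuclideanSpace ℂ (Fin 2) := WithLp.toLp 2 ![a, b]

lemma st11_pt2_zero : pt2 0 0 = 0 := by
  ext i; fin_cases i <;> simp [pt2]

lemma st11_pt2_sub (a c a' c' : ℂ) : pt2 a c - pt2 a' c' = pt2 (a - a') (c - c') := by
  ext i; fin_cases i <;> simp [pt2]

lemma st11_norm_sq_pt2 (a c : ℂ) : ‖pt2 a c‖ = Real.sqrt (‖a‖ ^ 2 + ‖c‖ ^ 2) := by
  rw [EuclideanSpace.norm_eq]; congr 1; simp [Fin.sum_univ_two, pt2]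

lemma st11_norm_pt2_le (a c : ℂ) : ‖pt2 a c‖ ≤ ‖a‖ + ‖c‖ := by
  rw [st11_norm_sq_pt2]
  have := norm_nonneg a; have := norm_nonneg c
  nlinarith [Real.sq_sqrt (by positivity : (0:ℝ) ≤ ‖a‖^2 + ‖c‖^2),
    Real.sqrt_nonneg (‖a‖^2 + ‖c‖^2)]

lemma st11_norm_fst_le (a c : ℂ) : ‖a‖ ≤ ‖pt2 a c‖ := by
  rw [st11_norm_sq_pt2]
  have h := Real.sqrt_le_sqrt
    (show ‖a‖^2 ≤ ‖a‖^2 + ‖c‖^2 from le_add_of_nonneg_right (sq_nonneg _))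
  rwa [Real.sqrt_sq (norm_nonneg a)] at h

lemma st11_norm_snd_le (a c : ℂ) : ‖c‖ ≤ ‖pt2 a c‖ := by
  rw [st11_norm_sq_pt2]
  have h := Real.sqrt_le_sqrt
    (show ‖c‖^2 ≤ ‖a‖^2 + ‖c‖^2 from le_add_of_nonneg_left (sq_nonneg _))
  rwa [Real.sqrt_sq (norm_nonneg c)] at h

lemma st11_norm_pt2_scale_le {x y : ℝ} (hx : 0 ≤ x) (hxy : x ≤ y) (a c : ℂ) :
    ‖pt2 ((x:ℂ) * a) ((y:ℂ) * c)‖ ≤ y * ‖pt2 a c‖ := by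
  have hy : 0 ≤ y := hx.trans hxy
  rw [st11_norm_sq_pt2, st11_norm_sq_pt2]
  have key : ‖(x:ℂ) * a‖ ^ 2 + ‖(y:ℂ) * c‖ ^ 2 ≤ (y * Real.sqrt (‖a‖^2 + ‖c‖^2))^2 := by
    have hs : Real.sqrt (‖a‖^2 + ‖c‖^2) ^ 2 = ‖a‖^2 + ‖c‖^2 :=
      Real.sq_sqrt (by positivity)
    simp only [norm_mul, Complex.norm_real, Real.norm_eq_abs, abs_of_nonneg hx,
      abs_of_nonneg hy, mul_pow, hs]
    nlinarith [sq_nonneg ‖a‖, pow_le_pow_left₀ hx hxy 2]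
  calc Real.sqrt (‖(x:ℂ) * a‖ ^ 2 + ‖(y:ℂ) * c‖ ^ 2) ≤
      Real.sqrt ((y * Real.sqrt (‖a‖^2 + ‖c‖^2))^2) := Real.sqrt_le_sqrt key
    _ = y * Real.sqrt (‖a‖^2 + ‖c‖^2) := Real.sqrt_sq (by positivity)

lemma st11_self_le_rpow {b t : ℝ} (hb0 : 0 < b) (hb1 : b ≤ 1) (ht0 : 0 ≤ t) (ht1 : t ≤ 1) :
    t ≤ t ^ b := by
  have h := Real.rpow_le_rpow_of_exponent_ge' ht0 ht1 hb0.le hb1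
  rwa [Real.rpow_one] at h

lemma st11_rpow_sub_le {b : ℝ} (hb0 : 0 ≤ b) (hb1 : b ≤ 1) {s t : ℝ} (hs : 0 ≤ s)
    (hst : s ≤ t) : t ^ b - s ^ b ≤ (t - s) ^ b := by
  have ha : (0:ℝ) ≤ t - s := sub_nonneg.2 hst
  have h := NNReal.coe_le_coe.mpr
    (NNReal.rpow_add_le_add_rpow (Real.toNNReal (t - s)) (Real.toNNReal s) hb0 hb1)
  push_cast [NNReal.coe_rpow, Real.coe_toNNReal _ ha, Real.coe_toNNReal _ hs] at h
  have he : t - s + s = t := by ring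
  rw [he] at h
  linarith

lemma st11_abs_rpow_sub_le {b : ℝ} (hb0 : 0 ≤ b) (hb1 : b ≤ 1) {s t : ℝ} (hs : 0 ≤ s)
    (ht : 0 ≤ t) : |t ^ b - s ^ b| ≤ |t - s| ^ b := by
  rcases le_total s t with h | h
  · rw [abs_of_nonneg (sub_nonneg.2 (Real.rpow_le_rpow hs h hb0)),
      abs_of_nonneg (sub_nonneg.2 h)]
    exact st11_rpow_sub_le hb0 hb1 hs h
  · rw [abs_of_nonpos (sub_nonpos.2 (Real.rpow_le_rpow ht h hb0)),
      abs_of_nonpos (sub_nonpos.2 h), neg_sub, neg_sub]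
    exact st11_rpow_sub_le hb0 hb1 ht h

lemma st11_decomp (x y x' y' a c a' c' : ℂ) :
    pt2 (x * a) (y * c) - pt2 (x' * a') (y' * c') =
      pt2 (x * (a - a')) (y * (c - c')) + pt2 ((x - x') * a') ((y - y') * c') := by
  ext i; fin_cases i <;> (simp [pt2]; try ring)

/-- Let `X = {xⁿ = y^{n+1}} ⊆ ℂ²`, `b = n/(n+1)`, and `f = (f₁, f₂) : S¹ → X ∩ S³` a
λ-bi-Lipschitz homeomorphism. Then `F(tv) = (t·f₁ v, t^b·f₂ v)` is `b`-Hölder on the closed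
unit disc with constant `6λ + 3`. -/
theorem stmt_11 (n : ℕ) (hn : 1 < n) (f₁ f₂ : ℂ → ℂ) (lam : ℝ) (hlam : 1 ≤ lam)
    (hbij : Set.BijOn (fun v => pt2 (f₁ v) (f₂ v)) (Metric.sphere (0:ℂ) 1)
      ({p : EuclideanSpace ℂ (Fin 2) | (p 0) ^ n = (p 1) ^ (n + 1)} ∩
        Metric.sphere (0 : EuclideanSpace ℂ (Fin 2)) 1))
    (hbil : ∀ v₁ ∈ Metric.sphere (0:ℂ) 1, ∀ v₂ ∈ Metric.sphere (0:ℂ) 1,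
      lam⁻¹ * ‖v₁ - v₂‖ ≤ ‖pt2 (f₁ v₁) (f₂ v₁) - pt2 (f₁ v₂) (f₂ v₂)‖ ∧
      ‖pt2 (f₁ v₁) (f₂ v₁) - pt2 (f₁ v₂) (f₂ v₂)‖ ≤ lam * ‖v₁ - v₂‖) :
    let b : ℝ := n / (n + 1)
    let F : ℂ → EuclideanSpace ℂ (Fin 2) := fun u =>
      pt2 ((‖u‖ : ℂ) * f₁ (‖u‖⁻¹ • u)) (((‖u‖ ^ b : ℝ) : ℂ) * f₂ (‖u‖⁻¹ • u))
    ∀ u₁ u₂ : ℂ, ‖u₁‖ ≤ 1 → ‖u₂‖ ≤ 1 →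
      ‖F u₁ - F u₂‖ ≤ (6 * lam + 3) * ‖u₁ - u₂‖ ^ b := by
  intro b F
  have hn' : (1:ℝ) < (n:ℝ) := by exact_mod_cast hn
  have hb0 : 0 < b := div_pos (by linarith) (by linarith)
  have hb1 : b ≤ 1 := by
    rw [div_le_one (by linarith)]; linarith
  have hnorm : ∀ v ∈ Metric.sphere (0:ℂ) 1, ‖pt2 (f₁ v) (f₂ v)‖ = 1 := by
    intro v hv
    have h := (hbij.mapsTo hv).2
    rwa [mem_sphere_zero_iff_norm] at h
  have hsph : ∀ u : ℂ, u ≠ 0 → (‖u‖⁻¹ • u) ∈ Metric.sphere (0:ℂ) 1 := by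
    intro u hu
    have h0 : ‖u‖ ≠ 0 := norm_ne_zero_iff.2 hu
    rw [mem_sphere_zero_iff_norm, norm_smul, norm_inv, norm_norm,
      inv_mul_cancel₀ h0]
  -- The unit bound for a single point
  have bound_one : ∀ u : ℂ, ‖u‖ ≤ 1 → ‖F u‖ ≤ 2 * ‖u‖ ^ b := by
    intro u hu
    rcases eq_or_ne u 0 with rfl | hu0
    · simp only [F, norm_zero, Complex.ofReal_zero, zero_mul,
        Real.zero_rpow hb0.ne', st11_pt2_zero]
      simp
    · have ht0 : 0 < ‖u‖ := norm_pos_iff.2 hu0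
      have hv := hsph u hu0
      set v := ‖u‖⁻¹ • u with hvdef
      have h1 : ‖f₁ v‖ ≤ 1 := (st11_norm_fst_le _ _).trans (hnorm v hv).le
      have h2 : ‖f₂ v‖ ≤ 1 := (st11_norm_snd_le _ _).trans (hnorm v hv).le
      have hle : ‖u‖ ≤ ‖u‖ ^ b := st11_self_le_rpow hb0 hb1 ht0.le hu
      calc ‖F u‖ ≤ ‖((‖u‖:ℂ) * f₁ v)‖ + ‖(((‖u‖ ^ b : ℝ):ℂ) * f₂ v)‖ :=
            st11_norm_pt2_le _ _
        _ = ‖u‖ * ‖f₁ v‖ + ‖u‖ ^ b * ‖f₂ v‖ := by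
            rw [norm_mul, norm_mul, Complex.norm_real, Complex.norm_real,
              Real.norm_eq_abs, Real.norm_eq_abs, abs_of_nonneg ht0.le,
              abs_of_nonneg (Real.rpow_nonneg ht0.le b)]
        _ ≤ ‖u‖ ^ b * 1 + ‖u‖ ^ b * 1 := by
            have hnn := Real.rpow_nonneg (norm_nonneg u) b
            exact add_le_add (mul_le_mul hle h1 (norm_nonneg _) hnn)
              (mul_le_mul_of_nonneg_left h2 hnn)
        _ = 2 * ‖u‖ ^ b := by ring
  intro u₁ u₂ h₁ h₂
  have rb0 : 0 ≤ ‖u₁ - u₂‖ ^ b := Real.rpow_nonneg (norm_nonneg _) b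
  rcases eq_or_ne u₁ 0 with rfl | h10
  · have hF0 : F 0 = 0 := by
      simp only [F, norm_zero, Complex.ofReal_zero, zero_mul,
        Real.zero_rpow hb0.ne', st11_pt2_zero]
    rw [hF0, zero_sub, norm_neg]
    have h := bound_one u₂ h₂
    have he : ‖u₂‖ = ‖(0:ℂ) - u₂‖ := by rw [zero_sub, norm_neg]
    rw [he] at h
    nlinarith [Real.rpow_nonneg (norm_nonneg ((0:ℂ) - u₂)) b]
  rcases eq_or_ne u₂ 0 with rfl | h20
  · have hF0 : F 0 = 0 := by
      simp only [F, norm_zero, Complex.ofReal_zero, zero_mul,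
        Real.zero_rpow hb0.ne', st11_pt2_zero]
    rw [hF0, sub_zero]
    have h := bound_one u₁ h₁
    have he : ‖u₁‖ = ‖u₁ - (0:ℂ)‖ := by rw [sub_zero]
    rw [he] at h
    nlinarith [Real.rpow_nonneg (norm_nonneg (u₁ - (0:ℂ))) b]
  -- main case
  have ht0 : 0 < ‖u₁‖ := norm_pos_iff.2 h10
  have hs0 : 0 < ‖u₂‖ := norm_pos_iff.2 h20
  have hv₁ := hsph u₁ h10
  have hv₂ := hsph u₂ h20
  set t := ‖u₁‖ with htdef
  set s := ‖u₂‖ with hsdef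
  set v₁ := ‖u₁‖⁻¹ • u₁ with hv1def
  set v₂ := ‖u₂‖⁻¹ • u₂ with hv2def
  set r := ‖u₁ - u₂‖ with hrdef
  have hf₁ : ‖f₁ v₂‖ ≤ 1 := (st11_norm_fst_le _ _).trans (hnorm v₂ hv₂).le
  have hf₂ : ‖f₂ v₂‖ ≤ 1 := (st11_norm_snd_le _ _).trans (hnorm v₂ hv₂).le
  have hdecomp : F u₁ - F u₂ =
      pt2 ((t:ℂ) * (f₁ v₁ - f₁ v₂)) (((t ^ b : ℝ):ℂ) * (f₂ v₁ - f₂ v₂)) +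
      pt2 (((t:ℂ) - (s:ℂ)) * f₁ v₂) ((((t ^ b : ℝ):ℂ) - ((s ^ b : ℝ):ℂ)) * f₂ v₂) := by
    simp only [F]
    exact st11_decomp _ _ _ _ _ _ _ _
  have hst : |t - s| ≤ r := by
    rw [hrdef, htdef, hsdef]; exact abs_norm_sub_norm_le u₁ u₂
  -- bound A
  have hlip := (hbil v₁ hv₁ v₂ hv₂).2
  have hA : ‖pt2 ((t:ℂ) * (f₁ v₁ - f₁ v₂)) (((t ^ b : ℝ):ℂ) * (f₂ v₁ - f₂ v₂))‖ ≤
      t ^ b * (lam * ‖v₁ - v₂‖) := by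
    have h := st11_norm_pt2_scale_le ht0.le
      (st11_self_le_rpow hb0 hb1 ht0.le h₁) (f₁ v₁ - f₁ v₂) (f₂ v₁ - f₂ v₂)
    refine h.trans ?_
    rw [← st11_pt2_sub]
    exact mul_le_mul_of_nonneg_left hlip (Real.rpow_nonneg ht0.le b)
  have hw0 : (0:ℝ) ≤ ‖v₁ - v₂‖ := norm_nonneg _
  have hcore : t ^ b * ‖v₁ - v₂‖ ≤ 2 * r ^ b := by
    have htv : t • v₁ = u₁ := by
      rw [hv1def, smul_smul, htdef, mul_inv_cancel₀ ht0.ne', one_smul]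
    have hsv : s • v₂ = u₂ := by
      rw [hv2def, smul_smul, hsdef, mul_inv_cancel₀ hs0.ne', one_smul]
    have hv₂n : ‖v₂‖ = 1 := by rwa [mem_sphere_zero_iff_norm] at hv₂
    have h1 : t * ‖v₁ - v₂‖ ≤ 2 * r := by
      have e1 : t * ‖v₁ - v₂‖ = ‖u₁ - t • v₂‖ := by
        rw [← htv, ← smul_sub, norm_smul, Real.norm_eq_abs, abs_of_nonneg ht0.le]
      have e2 : ‖u₂ - t • v₂‖ = |s - t| := by
        rw [← hsv, ← sub_smul, norm_smul, hv₂n, Real.norm_eq_abs, mul_one]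
      have e3 : ‖u₁ - t • v₂‖ ≤ ‖u₁ - u₂‖ + ‖u₂ - t • v₂‖ := by
        have : u₁ - t • v₂ = (u₁ - u₂) + (u₂ - t • v₂) := by ring
        rw [this]; exact norm_add_le _ _
      have e4 : |s - t| ≤ r := by rw [abs_sub_comm]; exact hst
      rw [e1]
      calc ‖u₁ - t • v₂‖ ≤ r + |s - t| := by rw [← hrdef] at e3; rw [e2] at e3; exact e3
        _ ≤ 2 * r := by linarith
    have h2 : ‖v₁ - v₂‖ ≤ 2 := by
      have := norm_sub_le v₁ v₂
      have hv₁n : ‖v₁‖ = 1 := by rwa [mem_sphere_zero_iff_norm] at hv₁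
      rw [hv₁n, hv₂n] at this; linarith
    have hr0 : (0:ℝ) ≤ r := norm_nonneg _
    calc t ^ b * ‖v₁ - v₂‖ = (t * ‖v₁ - v₂‖) ^ b * ‖v₁ - v₂‖ ^ (1 - b) := by
          rw [Real.mul_rpow ht0.le hw0, mul_assoc, ← Real.rpow_add' hw0 (by norm_num),
            add_sub_cancel, Real.rpow_one]
      _ ≤ (2 * r) ^ b * 2 ^ (1 - b) := by
          apply mul_le_mul (Real.rpow_le_rpow (by positivity) h1 hb0.le)
            (Real.rpow_le_rpow hw0 h2 (by linarith)) (Real.rpow_nonneg hw0 _)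
            (Real.rpow_nonneg (by positivity) _)
      _ = 2 * r ^ b := by
          rw [Real.mul_rpow (by norm_num) hr0, mul_right_comm,
            ← Real.rpow_add (by norm_num : (0:ℝ) < 2), add_sub_cancel, Real.rpow_one]
  -- bound B
  have hB : ‖pt2 (((t:ℂ) - (s:ℂ)) * f₁ v₂)
      ((((t ^ b : ℝ):ℂ) - ((s ^ b : ℝ):ℂ)) * f₂ v₂)‖ ≤ 2 * r ^ b := by
    have habs1 : |t - s| ≤ |t - s| ^ b := by
      apply st11_self_le_rpow hb0 hb1 (abs_nonneg _)
      rw [abs_le]; constructor <;> linarith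
    have habs2 : |t - s| ^ b ≤ r ^ b :=
      Real.rpow_le_rpow (abs_nonneg _) hst hb0.le
    have habs3 : |t ^ b - s ^ b| ≤ |t - s| ^ b :=
      st11_abs_rpow_sub_le hb0.le hb1 hs0.le ht0.le
    have e1 : ‖((t:ℂ) - (s:ℂ)) * f₁ v₂‖ ≤ |t - s| := by
      rw [norm_mul, ← Complex.ofReal_sub, Complex.norm_real, Real.norm_eq_abs]
      have h := mul_le_mul_of_nonneg_left hf₁ (abs_nonneg (t - s))
      simpa using h
    have e2 : ‖(((t ^ b : ℝ):ℂ) - ((s ^ b : ℝ):ℂ)) * f₂ v₂‖ ≤ |t ^ b - s ^ b| := by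
      rw [norm_mul, ← Complex.ofReal_sub, Complex.norm_real, Real.norm_eq_abs]
      have h := mul_le_mul_of_nonneg_left hf₂ (abs_nonneg (t ^ b - s ^ b))
      simpa using h
    refine (st11_norm_pt2_le _ _).trans ?_
    have h3 := habs1.trans habs2
    have h4 := habs3.trans habs2
    linarith
  rw [hdecomp]
  refine ((norm_add_le _ _).trans (add_le_add hA hB)).trans ?_
  have hmul : lam * (t ^ b * ‖v₁ - v₂‖) ≤ lam * (2 * r ^ b) :=
    mul_le_mul_of_nonneg_left hcore (le_trans zero_le_one hlam)
  nlinarith [rb0]
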